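/- Let X be an n×n real Gaussian matrix. Then E[ perm(X)⁴ ] = ((n+1)(n+2)/2)·(n!)², i.e. E[perm(X)⁴] equals the binomial coefficient C(n+2, 2) times (n!)². -/

import Mathlib

open MeasureTheory ProbabilityTheory Filter

/-- The distribution of an n×n real Gaussian matrix: i.i.d. standard real Gaussian
entries (mean 0, variance 1). -/
noncomputable def gMatR (n : ℕ) : Measure (Fin n → Fin n → ℝ) :=
  Measure.pi fun _ => Measure.pi fun _ => gaussianReal 0 1

/-- The permanent of an n×n real matrix. -/
noncomputable def rperm {n : ℕ} (A : Fin n → Fin n → ℝ) : ℝ :=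
  ∑ σ : Equiv.Perm (Fin n), ∏ i, A i (σ i)

/-- The ε-noise of a matrix X with noise matrix U: √(1-ε)·X + √ε·U. -/
noncomputable def noisyR {n : ℕ} (ε : ℝ) (X U : Fin n → Fin n → ℝ) : Fin n → Fin n → ℝ :=
  fun i j => Real.sqrt (1 - ε) * X i j + Real.sqrt ε * U i j

/-- g(X) = E[perm(Y)² | X], where Y is an ε-noise of X: since the noise matrix U is
independent of X, this conditional expectation is the integral over U. -/
noncomputable def gFunR (n : ℕ) (ε : ℝ) (X : Fin n → Fin n → ℝ) : ℝ :=
  ∫ U, (rperm (noisyR ε X U)) ^ 2 ∂(gMatR n)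

/-- Covariance of two real random variables: Cov(f,g) = E[(f - E f)(g - E g)]. -/
noncomputable def cov {α : Type*} [MeasurableSpace α] (μ : Measure α) (f g : α → ℝ) : ℝ :=
  ∫ x, (f x - ∫ y, f y ∂μ) * (g x - ∫ y, g y ∂μ) ∂μ

/-- Correlation: corr(f,g) = Cov(f,g)/(√Var(f)·√Var(g)). -/
noncomputable def corr {α : Type*} [MeasurableSpace α] (μ : Measure α) (f g : α → ℝ) : ℝ :=
  cov μ f g / (Real.sqrt (cov μ f f) * Real.sqrt (cov μ g g))


open scoped NNReal ENNReal

section PiLemmas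
open Fintype MeasureTheory.Measure

theorem myIntegrable_fin_prod {n : ℕ} {E : Type*}
    [MeasurableSpace E] (μ : Measure E) [SigmaFinite μ]
    {f : Fin n → E → ℝ} (hf : ∀ i, Integrable (f i) μ) :
    Integrable (fun (x : Fin n → E) ↦ ∏ i, f i (x i)) (Measure.pi fun _ => μ) := by
  induction n with
  | zero => simp only [Finset.univ_eq_empty, Finset.prod_empty,
      integrable_const_iff, one_ne_zero, pi_empty_univ, ENNReal.one_lt_top, or_true]; exact Or.inr ⟨by rw [pi_empty_univ]; exact ENNReal.one_lt_top⟩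
  | succ n n_ih =>
      have := ((measurePreserving_piFinSuccAbove (fun _ : Fin (n+1) => μ) 0).symm)
      rw [← this.integrable_comp_emb (MeasurableEquiv.measurableEmbedding _)]
      simp_rw [MeasurableEquiv.piFinSuccAbove_symm_apply, Fin.insertNthEquiv,
        Fin.prod_univ_succ, Fin.insertNth_zero]
      simp only [Fin.zero_succAbove, Function.comp_def, Fin.cons_zero, Fin.cons_succ]
      have : Integrable (fun (x : Fin n → E) ↦ ∏ j, f (Fin.succ j) (x j))
          (Measure.pi fun _ => μ) :=
        n_ih (fun i ↦ hf _)
      exact Integrable.mul_prod (hf 0) this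

theorem myIntegral_fin_prod {n : ℕ} {E : Type*}
    [MeasurableSpace E] (μ : Measure E) [SigmaFinite μ]
    (f : Fin n → E → ℝ) :
    ∫ x : Fin n → E, ∏ i, f i (x i) ∂(Measure.pi fun _ => μ) = ∏ i, ∫ x, f i x ∂μ := by
  induction n with
  | zero =>
      simp only [Finset.univ_eq_empty, Finset.prod_empty, integral_const,
        measureReal_def, pi_empty_univ, ENNReal.toReal_one, smul_eq_mul, mul_one, pow_zero, one_smul]
  | succ n n_ih =>
      have h1 : ∫ x : Fin (n+1) → E, ∏ i, f i (x i) ∂(Measure.pi fun _ => μ)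
          = ∫ x : E × (Fin n → E),
            f 0 x.1 * ∏ i : Fin n, f (Fin.succ i) (x.2 i)
            ∂(μ.prod (Measure.pi fun _ => μ)) := by
        rw [← ((measurePreserving_piFinSuccAbove
          (fun _ : Fin (n+1) => μ) 0).symm).integral_comp']
        simp_rw [MeasurableEquiv.piFinSuccAbove_symm_apply, Fin.insertNthEquiv,
          Fin.prod_univ_succ, Fin.insertNth_zero, Equiv.coe_fn_mk, Fin.cons_succ]
        simp only [Fin.cons_zero, cast_eq]
      rw [h1, integral_prod_mul (f := f 0) (g := fun y : Fin n → E => ∏ i, f i.succ (y i)),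
        n_ih, Fin.prod_univ_succ]


section Moments
open Real

noncomputable def gInt (k : ℕ) : ℝ := ∫ x : ℝ, x ^ k * rexp (-(2⁻¹ : ℝ) * x ^ 2)

lemma integrable_pow_mul_gauss (k : ℕ) :
    Integrable (fun x : ℝ => x ^ k * rexp (-(2⁻¹ : ℝ) * x ^ 2)) := by
  have h := integrable_rpow_mul_exp_neg_mul_sq (b := 2⁻¹) (by norm_num)
    (s := (k : ℝ)) (by have := Nat.cast_nonneg (α := ℝ) k; linarith)
  refine h.congr (Filter.Eventually.of_forall fun x => ?_)
  simp [Real.rpow_natCast]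

lemma gInt_succ_succ (k : ℕ) : gInt (k + 2) = (k + 1) * gInt k := by
  have hderiv : ∀ x : ℝ, HasDerivAt (fun x : ℝ => x ^ (k+1) * rexp (-(2⁻¹ : ℝ) * x ^ 2))
      ((k+1 : ℝ) * x ^ k * rexp (-(2⁻¹ : ℝ) * x ^ 2)
        - x ^ (k+2) * rexp (-(2⁻¹ : ℝ) * x ^ 2)) x := by
    intro x
    have h1 : HasDerivAt (fun x : ℝ => x ^ (k+1)) ((k+1 : ℝ) * x ^ k) x := by
      simpa using hasDerivAt_pow (k+1) x
    have h2 : HasDerivAt (fun x : ℝ => rexp (-(2⁻¹ : ℝ) * x ^ 2))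
        (rexp (-(2⁻¹ : ℝ) * x ^ 2) * (-(2⁻¹ : ℝ) * (2 * x))) x := by
      have := ((hasDerivAt_pow 2 x).const_mul (-(2⁻¹ : ℝ))).exp
      simpa using this
    have := h1.mul h2
    refine this.congr_deriv ?_
    ring
  have hint : Integrable (fun x : ℝ =>
      (k+1 : ℝ) * x ^ k * rexp (-(2⁻¹ : ℝ) * x ^ 2)
        - x ^ (k+2) * rexp (-(2⁻¹ : ℝ) * x ^ 2)) := by
    exact (((integrable_pow_mul_gauss k).const_mul ((k:ℝ)+1)).congr
      (Filter.Eventually.of_forall fun x => by ring)).sub (integrable_pow_mul_gauss (k+2))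
  have h0 := integral_eq_zero_of_hasDerivAt_of_integrable hderiv hint
    (integrable_pow_mul_gauss (k+1))
  rw [integral_sub (((integrable_pow_mul_gauss k).const_mul ((k:ℝ)+1)).congr
      (Filter.Eventually.of_forall fun x => by ring)) (integrable_pow_mul_gauss (k+2))] at h0
  have h1 : ∫ x : ℝ, (k+1 : ℝ) * x ^ k * rexp (-(2⁻¹ : ℝ) * x ^ 2)
      = (k+1 : ℝ) * gInt k := by
    rw [gInt, ← integral_const_mul]
    congr 1; ext x; ring
  rw [h1] at h0
  have : gInt (k+2) = ∫ x : ℝ, x ^ (k+2) * rexp (-(2⁻¹ : ℝ) * x ^ 2) := rfl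
  rw [this]
  linarith
lemma gInt_zero : gInt 0 = Real.sqrt (2 * π) := by
  rw [gInt]
  simp only [pow_zero, one_mul]
  rw [integral_gaussian]
  congr 1
  rw [div_eq_mul_inv, inv_inv, mul_comm]
lemma gInt_one : gInt 1 = 0 := by
  have hderiv : ∀ x : ℝ, HasDerivAt (fun x : ℝ => -rexp (-(2⁻¹ : ℝ) * x ^ 2))
      (x ^ 1 * rexp (-(2⁻¹ : ℝ) * x ^ 2)) x := by
    intro x
    have := (((hasDerivAt_pow 2 x).const_mul (-(2⁻¹ : ℝ))).exp).neg
    refine this.congr_deriv ?_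
    simp only [Nat.cast_ofNat, show (2:ℕ) - 1 = 1 from rfl]
    ring
  have h0 := integral_eq_zero_of_hasDerivAt_of_integrable hderiv
    (integrable_pow_mul_gauss 1) ((integrable_pow_mul_gauss 0).congr
      (Filter.Eventually.of_forall fun x => by simp)).neg
  exact h0

lemma gaussianPDFReal_std (x : ℝ) :
    gaussianPDFReal 0 1 x = (Real.sqrt (2 * π))⁻¹ * rexp (-(2⁻¹ : ℝ) * x ^ 2) := by
  rw [gaussianPDFReal]
  simp only [NNReal.coe_one, mul_one, sub_zero]
  rw [show -x ^ 2 / 2 = -(2⁻¹ : ℝ) * x ^ 2 by ring]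

noncomputable def gm (k : ℕ) : ℝ := ∫ x : ℝ, x ^ k ∂(gaussianReal 0 1)

lemma integral_gaussianReal_eq (g : ℝ → ℝ) :
    ∫ x, g x ∂(gaussianReal 0 1)
      = ∫ x : ℝ, (Real.sqrt (2 * π))⁻¹ * rexp (-(2⁻¹ : ℝ) * x ^ 2) * g x := by
  rw [gaussianReal_of_var_ne_zero 0 one_ne_zero]
  have hpdf : (gaussianPDF 0 1) = fun x => ((Real.toNNReal (gaussianPDFReal 0 1 x) : ℝ≥0) : ℝ≥0∞) := by
    ext x; rw [gaussianPDF]; rfl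
  rw [hpdf, integral_withDensity_eq_integral_smul
    ((measurable_gaussianPDFReal 0 1).real_toNNReal) g]
  congr 1
  ext x
  rw [NNReal.smul_def, smul_eq_mul, Real.coe_toNNReal _ (gaussianPDFReal_nonneg 0 1 x),
    gaussianPDFReal_std]

lemma integrable_pow_gaussianReal (k : ℕ) :
    Integrable (fun x : ℝ => x ^ k) (gaussianReal 0 1) := by
  rw [gaussianReal_of_var_ne_zero 0 one_ne_zero]
  rw [integrable_withDensity_iff (measurable_gaussianPDF 0 1)
    (Filter.Eventually.of_forall fun x => ENNReal.ofReal_lt_top)]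
  have : (fun x : ℝ => x ^ k * (gaussianPDF 0 1 x).toReal)
      = fun x : ℝ => (Real.sqrt (2 * π))⁻¹ * (x ^ k * rexp (-(2⁻¹ : ℝ) * x ^ 2)) := by
    ext x
    rw [gaussianPDF, ENNReal.toReal_ofReal (gaussianPDFReal_nonneg 0 1 x), gaussianPDFReal_std]
    ring
  rw [this]
  exact (integrable_pow_mul_gauss k).const_mul _

lemma gm_eq (k : ℕ) : gm k = (Real.sqrt (2 * π))⁻¹ * gInt k := by
  rw [gm, integral_gaussianReal_eq, gInt, ← integral_const_mul]
  congr 1; ext x; ring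

lemma sqrt_two_pi_pos : (0:ℝ) < Real.sqrt (2 * π) := Real.sqrt_pos.2 (by positivity)

lemma gm_zero : gm 0 = 1 := by
  rw [gm_eq, gInt_zero, inv_mul_cancel₀ (ne_of_gt sqrt_two_pi_pos)]
lemma gm_one : gm 1 = 0 := by rw [gm_eq, gInt_one, mul_zero]
lemma gm_two : gm 2 = 1 := by
  have : gInt 2 = 1 * gInt 0 := by simpa using gInt_succ_succ 0
  rw [gm_eq, this, one_mul, gInt_zero, inv_mul_cancel₀ (ne_of_gt sqrt_two_pi_pos)]
lemma gm_three : gm 3 = 0 := by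
  have : gInt 3 = (1 + 1) * gInt 1 := by simpa using gInt_succ_succ 1
  rw [gm_eq, this, gInt_one, mul_zero, mul_zero]
lemma gm_four : gm 4 = 3 := by
  have h2 : gInt 2 = 1 * gInt 0 := by simpa using gInt_succ_succ 0
  have h4 : gInt 4 = (2 + 1) * gInt 2 := by simpa using gInt_succ_succ 2
  rw [gm_eq, h4, h2, one_mul, gInt_zero]
  have := sqrt_two_pi_pos
  field_simp
  ring

end Moments

/-- the count of j among a,b,c,d -/
def cnt {n : ℕ} (a b c d j : Fin n) : ℕ :=
  (if a = j then 1 else 0) + (if b = j then 1 else 0)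
    + (if c = j then 1 else 0) + (if d = j then 1 else 0)

lemma prod_pow_cnt {n : ℕ} (a b c d : Fin n) (x : Fin n → ℝ) :
    x a * x b * x c * x d = ∏ j, x j ^ cnt a b c d j := by
  simp only [cnt, pow_add, Finset.prod_mul_distrib]
  simp [pow_ite, Finset.prod_ite_eq]

lemma row_moment {n : ℕ} (e : Fin n → ℕ) :
    ∫ x : Fin n → ℝ, ∏ j, x j ^ e j ∂(Measure.pi fun _ => gaussianReal 0 1)
      = ∏ j, gm (e j) :=
  myIntegral_fin_prod (gaussianReal 0 1) (fun j t => t ^ e j)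

lemma integrable_four {n : ℕ} (a b c d : Fin n) :
    Integrable (fun x : Fin n → ℝ => x a * x b * x c * x d)
      (Measure.pi fun _ => gaussianReal 0 1) := by
  have := myIntegrable_fin_prod (gaussianReal 0 1)
    (f := fun j t => t ^ cnt a b c d j) (fun j => integrable_pow_gaussianReal _)
  refine this.congr (Filter.Eventually.of_forall fun x => ?_)
  exact (prod_pow_cnt a b c d x).symm

lemma prod_gm_zero {n : ℕ} (e : Fin n → ℕ) (a : Fin n) (ha : e a = 1 ∨ e a = 3) :
    ∏ j, gm (e j) = 0 := by
  refine Finset.prod_eq_zero (Finset.mem_univ a) ?_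
  rcases ha with h | h <;> rw [h]
  · exact gm_one
  · exact gm_three

lemma prod_gm_single {n : ℕ} (e : Fin n → ℕ) (a : Fin n) (ha : e a = 4)
    (h0 : ∀ j, j ≠ a → e j = 0) : ∏ j, gm (e j) = 3 := by
  rw [Finset.prod_eq_single a (fun j _ hj => by rw [h0 j hj, gm_zero])
    (fun h => absurd (Finset.mem_univ a) h), ha, gm_four]

lemma prod_gm_pair {n : ℕ} (e : Fin n → ℕ) (a c : Fin n) (hac : a ≠ c)
    (ha : e a = 2) (hc : e c = 2) (h0 : ∀ j, j ≠ a → j ≠ c → e j = 0) :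
    ∏ j, gm (e j) = 1 := by
  have h1 : ∏ j ∈ ({a, c} : Finset (Fin n)), gm (e j) = ∏ j, gm (e j) :=
    Finset.prod_subset (Finset.subset_univ _) (fun j _ hj => by
      simp only [Finset.mem_insert, Finset.mem_singleton, not_or] at hj
      rw [h0 j hj.1 hj.2, gm_zero])
  rw [← h1, Finset.prod_pair hac, ha, hc, gm_two, mul_one]

lemma integral_four {n : ℕ} (a b c d : Fin n) :
    ∫ x : Fin n → ℝ, x a * x b * x c * x d ∂(Measure.pi fun _ => gaussianReal 0 1)
      = (if a = b then (1:ℝ) else 0) * (if c = d then 1 else 0)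
        + (if a = c then (1:ℝ) else 0) * (if b = d then 1 else 0)
        + (if a = d then (1:ℝ) else 0) * (if b = c then 1 else 0) := by
  have key : ∫ x : Fin n → ℝ, x a * x b * x c * x d ∂(Measure.pi fun _ => gaussianReal 0 1)
      = ∏ j, gm (cnt a b c d j) := by
    rw [← row_moment]
    exact integral_congr_ae (Filter.Eventually.of_forall fun x => prod_pow_cnt a b c d x)
  rw [key]
  by_cases hab : a = b
  · subst hab
    by_cases hcd : c = d
    · subst hcd
      by_cases hac : a = c
      · subst hac
        rw [prod_gm_single _ a (by simp [cnt]) (fun j hj => by simp [cnt, (Ne.symm hj)])]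
        norm_num
      · rw [prod_gm_pair _ a c hac (by simp [cnt, hac, Ne.symm hac])
          (by simp [cnt, hac, Ne.symm hac])
          (fun j hj1 hj2 => by simp [cnt, Ne.symm hj1, Ne.symm hj2])]
        simp [hac]
    · -- a = b, c ≠ d
      rw [prod_gm_zero _ c ?_]
      · by_cases hac : a = c
        · have had : a ≠ d := fun h => hcd (hac ▸ h)
          simp [hcd, had]
        · simp [hcd, hac]
      · by_cases hac : a = c
        · right; simp [cnt, hac, Ne.symm hcd, hcd]
        · left; simp [cnt, hac, Ne.symm hcd, hcd]
  · by_cases hcd : c = d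
    · subst hcd
      rw [prod_gm_zero _ b ?_]
      · by_cases hbc : b = c
        · have : a ≠ c := fun h => hab (h.trans hbc.symm)
          simp [hab, this]
        · simp [hab, hbc]
      · by_cases hbc : c = b
        · right; simp [cnt, Ne.symm hab, hab, hbc]
        · left; simp [cnt, Ne.symm hab, hab, hbc]
    · by_cases hac : a = c
      · subst hac
        by_cases hbd : b = d
        · subst hbd
          rw [prod_gm_pair _ a b hab (by simp [cnt, hab, Ne.symm hab])
            (by simp [cnt, hab, Ne.symm hab])
            (fun j hj1 hj2 => by simp [cnt, Ne.symm hj1, Ne.symm hj2])]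
          simp [hab, hcd]
        · rw [prod_gm_zero _ b
            (by left; simp [cnt, hab, Ne.symm hab, hbd, Ne.symm hbd])]
          simp [hab, hbd, hcd]
      · by_cases had : a = d
        · subst had
          by_cases hbc : b = c
          · subst hbc
            rw [prod_gm_pair _ a b hab (by simp [cnt, hab, Ne.symm hab])
              (by simp [cnt, hab, Ne.symm hab])
              (fun j hj1 hj2 => by simp [cnt, Ne.symm hj1, Ne.symm hj2])]
            simp [hab, hac]
          · rw [prod_gm_zero _ b
              (by left; simp [cnt, hab, Ne.symm hab, hbc, Ne.symm hbc])]
            simp [hab, hac, hbc]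
        · rw [prod_gm_zero _ a
            (by left; simp [cnt, hab, hac, had, Ne.symm hab, Ne.symm hac, Ne.symm had])]
          simp [hab, hac, had]


lemma fin3_cases (k : Fin 3) : k = 0 ∨ k = 1 ∨ k = 2 := by revert k; decide

def constr {n : ℕ} (k : Fin 3) (a b c d : Fin n) : Prop :=
  if k = 0 then a = b ∧ c = d else if k = 1 then a = c ∧ b = d else a = d ∧ b = c

instance {n : ℕ} (k : Fin 3) (a b c d : Fin n) : Decidable (constr k a b c d) := by
  unfold constr; infer_instance

lemma constr_zero {n : ℕ} (a b c d : Fin n) : constr 0 a b c d ↔ a = b ∧ c = d := by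
  simp [constr]
lemma constr_one {n : ℕ} (a b c d : Fin n) : constr 1 a b c d ↔ a = c ∧ b = d := by
  simp [constr]
lemma constr_two {n : ℕ} (a b c d : Fin n) : constr 2 a b c d ↔ a = d ∧ b = c := by
  simp [constr]

section Fixedc

variable {n : ℕ} {c : Fin n → Fin 3}

/-- glue a family of fiber permutations into a permutation of `Fin n`. -/
def glue (c : Fin n → Fin 3) (F : ∀ k : Fin 3, Equiv.Perm {i // c i = k}) : Equiv.Perm (Fin n) :=
  (Equiv.sigmaFiberEquiv c).symm.trans ((Equiv.sigmaCongrRight F).trans (Equiv.sigmaFiberEquiv c))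

lemma glue_apply (F : ∀ k : Fin 3, Equiv.Perm {i // c i = k}) (i : Fin n) :
    glue c F i = (F (c i) ⟨i, rfl⟩).val := rfl

lemma glue_fiber (F : ∀ k : Fin 3, Equiv.Perm {i // c i = k}) (i : Fin n) :
    c (glue c F i) = c i := (F (c i) ⟨i, rfl⟩).prop

lemma mix_inj (σ φ : Equiv.Perm (Fin n)) (hφ : ∀ i, c (φ i) = c i) (k : Fin 3) :
    Function.Injective (fun i => if c i = k then σ i else σ (φ i)) := by
  intro i j h
  simp only at h
  by_cases hi : c i = k <;> by_cases hj : c j = k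
  · rw [if_pos hi, if_pos hj] at h; exact σ.injective h
  · rw [if_pos hi, if_neg hj] at h
    have hij : i = φ j := σ.injective h
    exact absurd (by rw [← hφ j, ← hij]; exact hi) hj
  · rw [if_neg hi, if_pos hj] at h
    have hij : φ i = j := σ.injective h
    exact absurd (by rw [← hφ i, hij]; exact hj) hi
  · rw [if_neg hi, if_neg hj] at h
    exact φ.injective (σ.injective h)

/-- the permutation `i ↦ if c i = k then σ i else σ (φ i)`. -/
noncomputable def mixPerm (σ φ : Equiv.Perm (Fin n)) (hφ : ∀ i, c (φ i) = c i) (k : Fin 3) :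
    Equiv.Perm (Fin n) :=
  Equiv.ofBijective _ ((Finite.injective_iff_bijective).1 (mix_inj σ φ hφ k))

lemma mixPerm_apply (σ φ : Equiv.Perm (Fin n)) (hφ : ∀ i, c (φ i) = c i) (k : Fin 3)
    (i : Fin n) : mixPerm σ φ hφ k i = if c i = k then σ i else σ (φ i) := rfl

/-- The big map. -/
noncomputable def Psi (c : Fin n → Fin 3)
    (p : Equiv.Perm (Fin n) × ∀ k : Fin 3, Equiv.Perm {i // c i = k}) :
    {q : Equiv.Perm (Fin n) × Equiv.Perm (Fin n) × Equiv.Perm (Fin n) × Equiv.Perm (Fin n) //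
      ∀ i, constr (c i) (q.1 i) (q.2.1 i) (q.2.2.1 i) (q.2.2.2 i)} :=
  ⟨⟨p.1, mixPerm p.1 (glue c p.2) (glue_fiber p.2) 0,
    mixPerm p.1 (glue c p.2) (glue_fiber p.2) 1,
    mixPerm p.1 (glue c p.2) (glue_fiber p.2) 2⟩, by
  intro i
  simp only [mixPerm_apply]
  rcases fin3_cases (c i) with h | h | h <;> rw [h] <;>
    simp [constr_zero, constr_one, constr_two]⟩

lemma Psi_bijective (c : Fin n → Fin 3) : Function.Bijective (Psi c) := by
  constructor
  · rintro ⟨σ, F⟩ ⟨σ', F'⟩ hpq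
    have h1 : σ = σ' := congrArg (fun q => q.val.1) hpq
    subst h1
    have h2 : mixPerm σ (glue c F) (glue_fiber F) 0 = mixPerm σ (glue c F') (glue_fiber F') 0 :=
      congrArg (fun q => q.val.2.1) hpq
    have h3 : mixPerm σ (glue c F) (glue_fiber F) 1 = mixPerm σ (glue c F') (glue_fiber F') 1 :=
      congrArg (fun q => q.val.2.2.1) hpq
    have hφ : glue c F = glue c F' := by
      refine Equiv.ext fun i => ?_
      by_cases hi : c i = 0
      · have := DFunLike.congr_fun h3 i
        rw [mixPerm_apply, mixPerm_apply, if_neg (by rw [hi]; decide),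
          if_neg (by rw [hi]; decide)] at this
        exact σ.injective this
      · have := DFunLike.congr_fun h2 i
        rw [mixPerm_apply, mixPerm_apply, if_neg hi, if_neg hi] at this
        exact σ.injective this
    have hF : F = F' := by
      funext k
      ext ⟨i, hi⟩
      subst hi
      have := DFunLike.congr_fun hφ i
      rw [glue_apply, glue_apply] at this
      exact congrArg Fin.val this
    rw [hF]
  · rintro ⟨⟨σ, τ, pp, ρ⟩, hq⟩
    simp only at hq
    have hc0 : ∀ i, c i = 0 → σ i = τ i ∧ pp i = ρ i := fun i hi => by
      have := hq i; rw [hi, constr_zero] at this; exact this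
    have hc1 : ∀ i, c i = 1 → σ i = pp i ∧ τ i = ρ i := fun i hi => by
      have := hq i; rw [hi, constr_one] at this; exact this
    have hc2 : ∀ i, c i = 2 → σ i = ρ i ∧ τ i = pp i := fun i hi => by
      have := hq i; rw [hi, constr_two] at this; exact this
    set ψ : Fin n → Fin n := fun i => if c i = 0 then pp i else τ i with hψdef
    have hψval : ∀ i, ψ i = if c i = 0 then pp i else τ i := fun i => rfl
    have hψρ : ∀ i, c i = 1 → ψ i = ρ i := fun i hi => by
      rw [hψval, if_neg (by rw [hi]; decide)]; exact (hc1 i hi).2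
    have hψp : ∀ i, c i = 2 → ψ i = pp i := fun i hi => by
      have h1 : ψ i = τ i := by rw [hψval, if_neg (by rw [hi]; decide)]
      rw [h1]; exact (hc2 i hi).2
    have hψρ0 : ∀ i, c i = 0 → ψ i = ρ i := fun i hi => by
      rw [hψval, if_pos hi]; exact (hc0 i hi).2
    have hψinj : Function.Injective ψ := by
      intro i j h
      by_cases hi : c i = 0 <;> by_cases hj : c j = 0
      · rw [hψval, hψval, if_pos hi, if_pos hj] at h; exact pp.injective h
      · rcases fin3_cases (c j) with h' | h' | h'
        · exact absurd h' hj
        · rw [hψρ0 i hi, hψρ j h'] at h; exact ρ.injective h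
        · rw [hψval, if_pos hi, hψp j h'] at h; exact pp.injective h
      · rcases fin3_cases (c i) with h' | h' | h'
        · exact absurd h' hi
        · rw [hψρ i h', hψρ0 j hj] at h; exact ρ.injective h
        · rw [hψp i h', hψval, if_pos hj] at h; exact pp.injective h
      · rw [hψval, hψval, if_neg hi, if_neg hj] at h; exact τ.injective h
    have hfinj : Function.Injective (fun i => σ.symm (ψ i)) :=
      fun i j h => hψinj (σ.symm.injective h)
    let φ : Equiv.Perm (Fin n) :=
      Equiv.ofBijective _ ((Finite.injective_iff_bijective).1 hfinj)
    have hφval : ∀ i, φ i = σ.symm (ψ i) := fun i => rfl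
    have hσφ : ∀ i, σ (φ i) = ψ i := fun i => by rw [hφval, Equiv.apply_symm_apply]
    have hψτ : ∀ i, c i ≠ 0 → ψ i = τ i := fun i hi => by rw [hψval, if_neg hi]
    have hψpp0 : ∀ i, c i = 0 → ψ i = pp i := fun i hi => by rw [hψval, if_pos hi]
    have hφc : ∀ i, c (φ i) = c i := by
      intro i
      have hστ : c (φ i) = 0 → ψ i = τ (φ i) := fun hj => by
        rw [← (hc0 _ hj).1, hσφ]
      have hσp : c (φ i) = 1 → ψ i = pp (φ i) := fun hj => by
        rw [← (hc1 _ hj).1, hσφ]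
      have hσρ : c (φ i) = 2 → ψ i = ρ (φ i) := fun hj => by
        rw [← (hc2 _ hj).1, hσφ]
      rcases fin3_cases (c (φ i)) with hj | hj | hj <;>
        rcases fin3_cases (c i) with hi | hi | hi <;> (try rw [hj, hi]) <;> exfalso
      · -- hj = 0, hi = 1
        have hji : φ i = i := τ.injective
          (((hστ hj).symm.trans (hψτ i (by rw [hi]; decide))))
        rw [hji] at hj; exact absurd (hi.symm.trans hj) (by decide)
      · have hji : φ i = i := τ.injective
          (((hστ hj).symm.trans (hψτ i (by rw [hi]; decide))))
        rw [hji] at hj; exact absurd (hi.symm.trans hj) (by decide)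
      · have hji : φ i = i := pp.injective (((hσp hj).symm.trans (hψpp0 i hi)))
        rw [hji] at hj; exact absurd (hi.symm.trans hj) (by decide)
      · have hji : φ i = i := pp.injective (((hσp hj).symm.trans (hψp i hi)))
        rw [hji] at hj; exact absurd (hi.symm.trans hj) (by decide)
      · have hji : φ i = i := ρ.injective (((hσρ hj).symm.trans (hψρ0 i hi)))
        rw [hji] at hj; exact absurd (hi.symm.trans hj) (by decide)
      · have hji : φ i = i := ρ.injective (((hσρ hj).symm.trans (hψρ i hi)))
        rw [hji] at hj; exact absurd (hi.symm.trans hj) (by decide)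
    let Ff : ∀ k : Fin 3, Equiv.Perm {i // c i = k} := fun k =>
      φ.subtypePerm (fun x => ⟨fun hx => by rw [hφc x] at hx; exact hx,
        fun hx => by rw [hφc x]; exact hx⟩)
    refine ⟨⟨σ, Ff⟩, ?_⟩
    refine Subtype.ext ?_
    have hglue : ∀ i, glue c Ff i = φ i := fun i => rfl
    have e1 : mixPerm σ (glue c Ff) (glue_fiber Ff) 0 = τ := by
      refine Equiv.ext fun i => ?_
      rw [mixPerm_apply, hglue i]
      by_cases hi : c i = 0
      · rw [if_pos hi]; exact (hc0 i hi).1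
      · rw [if_neg hi, hσφ, hψτ i hi]
    have e2 : mixPerm σ (glue c Ff) (glue_fiber Ff) 1 = pp := by
      refine Equiv.ext fun i => ?_
      rw [mixPerm_apply, hglue i]
      by_cases hi : c i = 1
      · rw [if_pos hi]; exact (hc1 i hi).1
      · rw [if_neg hi, hσφ]
        rcases fin3_cases (c i) with h' | h' | h'
        · exact hψpp0 i h'
        · exact absurd h' hi
        · exact hψp i h'
    have e3 : mixPerm σ (glue c Ff) (glue_fiber Ff) 2 = ρ := by
      refine Equiv.ext fun i => ?_
      rw [mixPerm_apply, hglue i]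
      by_cases hi : c i = 2
      · rw [if_pos hi]; exact (hc2 i hi).1
      · rw [if_neg hi, hσφ]
        rcases fin3_cases (c i) with h' | h' | h'
        · exact hψρ0 i h'
        · exact hψρ i h'
        · exact absurd h' hi
    show (σ, mixPerm σ (glue c Ff) (glue_fiber Ff) 0, mixPerm σ (glue c Ff) (glue_fiber Ff) 1,
      mixPerm σ (glue c Ff) (glue_fiber Ff) 2) = (σ, τ, pp, ρ)
    rw [e1, e2, e3]

end Fixedc

lemma card_quad {n : ℕ} (c : Fin n → Fin 3) :
    Fintype.card {q : Equiv.Perm (Fin n) × Equiv.Perm (Fin n) × Equiv.Perm (Fin n) ×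
        Equiv.Perm (Fin n) //
      ∀ i, constr (c i) (q.1 i) (q.2.1 i) (q.2.2.1 i) (q.2.2.2 i)}
    = n.factorial * ∏ k : Fin 3, (Fintype.card {i // c i = k}).factorial := by
  rw [← Fintype.card_of_bijective (Psi_bijective c), Fintype.card_prod, Fintype.card_perm,
    Fintype.card_fin, Fintype.card_pi]
  congr 1
  exact Finset.prod_congr rfl fun k _ => Fintype.card_perm

lemma card_fiber_cons {n : ℕ} (k0 k : Fin 3) (c' : Fin n → Fin 3) :
    Fintype.card {i : Fin (n+1) // Fin.cons (α := fun _ => Fin 3) k0 c' i = k}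
      = (if k0 = k then 1 else 0) + Fintype.card {i : Fin n // c' i = k} := by
  simp only [Fintype.card_subtype, Finset.card_filter]
  rw [Fin.sum_univ_succ]
  simp [Fin.cons_zero, Fin.cons_succ]

lemma sum_fiber_card {n : ℕ} (c' : Fin n → Fin 3) :
    ∑ k : Fin 3, Fintype.card {i // c' i = k} = n := by
  have := Fintype.card_congr (Equiv.sigmaFiberEquiv c')
  rw [Fintype.card_sigma, Fintype.card_fin] at this
  exact this

lemma S_rec (n : ℕ) :
    (∑ cc : Fin n → Fin 3, ∏ k : Fin 3, (Fintype.card {i // cc i = k}).factorial) * 2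
      = (n+2).factorial := by
  induction n with
  | zero =>
      have h1 : ∀ cc : Fin 0 → Fin 3,
          ∏ k : Fin 3, (Fintype.card {i // cc i = k}).factorial = 1 := fun cc => by
        have h0 : ∀ k, Fintype.card {i : Fin 0 // cc i = k} = 0 := fun k =>
          Fintype.card_eq_zero
        refine Finset.prod_eq_one fun k _ => by rw [h0 k]; rfl
      rw [Finset.sum_congr rfl (fun cc _ => h1 cc), Finset.sum_const]
      simp [Nat.factorial]
  | succ n ih =>
      rw [← Equiv.sum_comp (Fin.consEquiv (fun _ : Fin (n+1) => Fin 3))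
        (fun cc => ∏ k : Fin 3, (Fintype.card {i // cc i = k}).factorial),
        Fintype.sum_prod_type]
      have key : ∀ (k0 : Fin 3) (c' : Fin n → Fin 3),
          ∏ k : Fin 3, (Fintype.card {i : Fin (n+1) // (Fin.consEquiv
              (fun _ : Fin (n+1) => Fin 3)) (k0, c') i = k}).factorial
          = (Fintype.card {i // c' i = k0} + 1) *
              ∏ k : Fin 3, (Fintype.card {i // c' i = k}).factorial := by
        intro k0 c'
        have hc : ∀ k, Fintype.card {i : Fin (n+1) // (Fin.consEquiv
            (fun _ : Fin (n+1) => Fin 3)) (k0, c') i = k}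
            = (if k0 = k then 1 else 0) + Fintype.card {i : Fin n // c' i = k} :=
          fun k => card_fiber_cons k0 k c'
        rw [Finset.prod_congr rfl (fun k _ => by rw [hc k])]
        rw [← Finset.mul_prod_erase Finset.univ _ (Finset.mem_univ k0), if_pos rfl,
          ← Finset.mul_prod_erase Finset.univ
            (fun k => (Fintype.card {i : Fin n // c' i = k}).factorial) (Finset.mem_univ k0)]
        rw [Finset.prod_congr rfl (fun k hk => by
          rw [if_neg (Finset.ne_of_mem_erase hk).symm, zero_add])]
        rw [add_comm 1 (Fintype.card {i // c' i = k0}), Nat.factorial_succ]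
        ring
      rw [Finset.sum_congr rfl (fun k0 _ => Finset.sum_congr rfl fun c' _ => key k0 c')]
      rw [Finset.sum_comm]
      have row : ∀ c' : Fin n → Fin 3,
          ∑ k0 : Fin 3, (Fintype.card {i // c' i = k0} + 1) *
              ∏ k : Fin 3, (Fintype.card {i // c' i = k}).factorial
          = (n + 3) * ∏ k : Fin 3, (Fintype.card {i // c' i = k}).factorial := by
        intro c'
        rw [← Finset.sum_mul]
        congr 1
        rw [Finset.sum_add_distrib, sum_fiber_card c']
        simp
      rw [Finset.sum_congr rfl (fun c' _ => row c'), ← Finset.mul_sum, mul_assoc, ih]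
      rfl


section Assembly

lemma wick_eq {n : ℕ} (a b c d : Fin n) :
    (if a = b then (1:ℝ) else 0) * (if c = d then 1 else 0)
      + (if a = c then (1:ℝ) else 0) * (if b = d then 1 else 0)
      + (if a = d then (1:ℝ) else 0) * (if b = c then 1 else 0)
    = ∑ k : Fin 3, if constr k a b c d then (1:ℝ) else 0 := by
  rw [Fin.sum_univ_three]
  by_cases h1 : a = b <;> by_cases h2 : c = d <;> by_cases h3 : a = c <;>
    by_cases h4 : b = d <;> by_cases h5 : a = d <;> by_cases h6 : b = c <;>
    simp [constr_zero, constr_one, constr_two, h1, h2, h3, h4, h5, h6]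

lemma expand_rperm {n : ℕ} (X : Fin n → Fin n → ℝ) :
    (rperm X)^4 = ∑ q : Equiv.Perm (Fin n) × Equiv.Perm (Fin n) × Equiv.Perm (Fin n) ×
        Equiv.Perm (Fin n),
      ∏ i, (X i (q.1 i) * X i (q.2.1 i) * X i (q.2.2.1 i) * X i (q.2.2.2 i)) := by
  simp only [Fintype.sum_prod_type, Finset.prod_mul_distrib]
  simp only [← Finset.sum_mul, ← Finset.mul_sum]
  rw [rperm]; ring

theorem main_sum (n : ℕ) :
    (∫ X, (rperm X) ^ 4 ∂(gMatR n)) * 2 = (n.factorial : ℝ) * (n+2).factorial := by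
  have hint : ∀ q : Equiv.Perm (Fin n) × Equiv.Perm (Fin n) × Equiv.Perm (Fin n) ×
      Equiv.Perm (Fin n),
      Integrable (fun X : Fin n → Fin n → ℝ =>
        ∏ i, (X i (q.1 i) * X i (q.2.1 i) * X i (q.2.2.1 i) * X i (q.2.2.2 i))) (gMatR n) := by
    intro q
    rw [gMatR]
    exact myIntegrable_fin_prod _ (fun i => integrable_four _ _ _ _)
  have step1 : ∫ X, (rperm X) ^ 4 ∂(gMatR n)
      = ∑ q : Equiv.Perm (Fin n) × Equiv.Perm (Fin n) × Equiv.Perm (Fin n) ×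
          Equiv.Perm (Fin n),
        ∏ i, ((if q.1 i = q.2.1 i then (1:ℝ) else 0) * (if q.2.2.1 i = q.2.2.2 i then 1 else 0)
          + (if q.1 i = q.2.2.1 i then (1:ℝ) else 0) * (if q.2.1 i = q.2.2.2 i then 1 else 0)
          + (if q.1 i = q.2.2.2 i then (1:ℝ) else 0) * (if q.2.1 i = q.2.2.1 i then 1 else 0)) := by
    rw [integral_congr_ae (Eventually.of_forall fun X => expand_rperm X)]
    rw [integral_finset_sum _ (fun q _ => hint q)]
    refine Finset.sum_congr rfl fun q _ => ?_
    rw [gMatR, myIntegral_fin_prod (Measure.pi fun _ => gaussianReal 0 1)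
      (fun i r => r (q.1 i) * r (q.2.1 i) * r (q.2.2.1 i) * r (q.2.2.2 i))]
    exact Finset.prod_congr rfl fun i _ => integral_four _ _ _ _
  rw [step1]
  have step2 : ∀ q : Equiv.Perm (Fin n) × Equiv.Perm (Fin n) × Equiv.Perm (Fin n) ×
      Equiv.Perm (Fin n),
      ∏ i, ((if q.1 i = q.2.1 i then (1:ℝ) else 0) * (if q.2.2.1 i = q.2.2.2 i then 1 else 0)
        + (if q.1 i = q.2.2.1 i then (1:ℝ) else 0) * (if q.2.1 i = q.2.2.2 i then 1 else 0)
        + (if q.1 i = q.2.2.2 i then (1:ℝ) else 0) * (if q.2.1 i = q.2.2.1 i then 1 else 0))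
      = ∑ c : Fin n → Fin 3,
          if (∀ i, constr (c i) (q.1 i) (q.2.1 i) (q.2.2.1 i) (q.2.2.2 i)) then (1:ℝ) else 0 := by
    intro q
    rw [Finset.prod_congr rfl fun i _ => wick_eq (q.1 i) (q.2.1 i) (q.2.2.1 i) (q.2.2.2 i)]
    rw [Finset.prod_univ_sum]
    rw [Fintype.piFinset_univ]
    refine Finset.sum_congr rfl fun c _ => ?_
    rw [Fintype.prod_boole]
    congr
  rw [Finset.sum_congr rfl fun q _ => step2 q, Finset.sum_comm]
  have step3 : ∀ c : Fin n → Fin 3,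
      (∑ q : Equiv.Perm (Fin n) × Equiv.Perm (Fin n) × Equiv.Perm (Fin n) × Equiv.Perm (Fin n),
        if (∀ i, constr (c i) (q.1 i) (q.2.1 i) (q.2.2.1 i) (q.2.2.2 i)) then (1:ℝ) else 0)
      = (n.factorial : ℝ) * ∏ k : Fin 3, ((Fintype.card {i // c i = k}).factorial : ℝ) := by
    intro c
    rw [Finset.sum_boole, ← Fintype.card_subtype, card_quad c]
    push_cast
    ring
  rw [Finset.sum_congr rfl fun c _ => step3 c, ← Finset.mul_sum]
  have step4 : (∑ c : Fin n → Fin 3, ∏ k : Fin 3,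
      ((Fintype.card {i // c i = k}).factorial : ℝ)) * 2 = ((n+2).factorial : ℝ) := by
    rw [show (∑ c : Fin n → Fin 3, ∏ k : Fin 3,
        ((Fintype.card {i // c i = k}).factorial : ℝ))
      = ((∑ c : Fin n → Fin 3, ∏ k : Fin 3,
        (Fintype.card {i // c i = k}).factorial : ℕ) : ℝ) by push_cast; rfl]
    rw [← Nat.cast_ofNat (n := 2), ← Nat.cast_mul, S_rec n]
  rw [mul_assoc, step4]

end Assembly

/-- E[perm(X)⁴] = ((n+1)(n+2)/2)·(n!)² = C(n+2,2)·(n!)² for an n×n real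
Gaussian matrix X. -/
theorem fourth_moment_perm_real_gaussian (n : ℕ) :
    (∫ X, (rperm X) ^ 4 ∂(gMatR n)) =
      ((n : ℝ) + 1) * ((n : ℝ) + 2) / 2 * (Nat.factorial n : ℝ) ^ 2 ∧
    (∫ X, (rperm X) ^ 4 ∂(gMatR n)) =
      (Nat.choose (n + 2) 2 : ℝ) * (Nat.factorial n : ℝ) ^ 2 := by
  have h := main_sum n
  have hfac : ((n+2).factorial : ℝ) = ((n:ℝ)+2) * ((n:ℝ)+1) * (n.factorial : ℝ) := by
    rw [show n+2 = (n+1)+1 from rfl, Nat.factorial_succ, Nat.factorial_succ]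
    push_cast; ring
  rw [hfac] at h
  have h1 : (∫ X, (rperm X) ^ 4 ∂(gMatR n))
      = ((n:ℝ)+1)*((n:ℝ)+2)/2 * (n.factorial:ℝ)^2 := by
    have h2 : ((n:ℝ)+1)*((n:ℝ)+2)/2*((n.factorial:ℝ))^2 * 2
        = (n.factorial:ℝ) * (((n:ℝ)+2)*((n:ℝ)+1)*(n.factorial:ℝ)) := by ring
    linarith
  refine ⟨h1, ?_⟩
  rw [h1, Nat.cast_choose_two]
  push_cast
  ring

end PiLemmas
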